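/- There exists exactly one positive real ω satisfying Equation (4), i.e., exactly one ω > 0 with U − L − 2β = (L·(ω − 1) − 2β·(1 − 1/k + ω/k))·(1 + ω/k)^k. -/
import Mathlib


/-- **Existence and uniqueness of the solution of Equation (4).** -/
theorem eq_omega_exists_unique
    (L U : ℝ) (hL : 0 < L) (hLU : L < U)
    (k : ℕ) (hk : 1 ≤ k)
    (β : ℝ) (hβ : 0 < 2 * β) (hβUL : 2 * β < U - L) (hβkL : 2 * β < (k : ℝ) * L) :
    ∃! ω : ℝ, 0 < ω ∧
      U - L - 2 * β
        = (L * (ω - 1) - 2 * β * (1 - 1 / (k : ℝ) + ω / (k : ℝ)))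
            * (1 + ω / (k : ℝ)) ^ k := by
  have hk1 : (1:ℝ) ≤ (k:ℝ) := by exact_mod_cast hk
  have hk0 : (0:ℝ) < (k:ℝ) := by linarith
  have hkne : k ≠ 0 := by omega
  set T : ℝ := U - L - 2 * β with hTdef
  have hT : 0 < T := by simp only [hTdef]; linarith
  set g : ℝ → ℝ := fun ω => L * (ω - 1) - 2 * β * (1 - 1 / (k : ℝ) + ω / (k : ℝ)) with hg
  set p : ℝ → ℝ := fun ω => (1 + ω / (k : ℝ)) ^ k with hp
  have hs : 0 < L - 2 * β / (k:ℝ) := by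
    rw [sub_pos, div_lt_iff₀ hk0]
    nlinarith
  have hgmono : ∀ a b : ℝ, a < b → g a < g b := by
    intro a b hab
    simp only [hg]
    have h1 : 0 < (L - 2 * β / (k:ℝ)) * (b - a) := mul_pos hs (by linarith)
    have h2 : (L - 2 * β / (k:ℝ)) * (b - a)
        = (L * (b - 1) - 2 * β * (1 - 1 / (k : ℝ) + b / (k : ℝ)))
          - (L * (a - 1) - 2 * β * (1 - 1 / (k : ℝ) + a / (k : ℝ))) := by
      field_simp
      ring
    linarith [h2 ▸ h1]
  have hppos : ∀ a : ℝ, 0 ≤ a → 0 < p a := by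
    intro a ha
    have : (0:ℝ) < 1 + a / (k:ℝ) := by positivity
    exact pow_pos this k
  have hpmono : ∀ a b : ℝ, 0 ≤ a → a < b → p a < p b := by
    intro a b ha hab
    have h1 : (0:ℝ) ≤ 1 + a / (k:ℝ) := by positivity
    have h2 : 1 + a / (k:ℝ) < 1 + b / (k:ℝ) := by gcongr
    exact pow_lt_pow_left₀ h2 h1 hkne
  -- strict monotonicity at solutions
  have key : ∀ a b : ℝ, 0 ≤ a → a < b → g a * p a = T → g a * p a < g b * p b := by
    intro a b ha hab heq
    have hpa := hppos a ha
    have hga : 0 < g a := by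
      by_contra h
      push_neg at h
      have : g a * p a ≤ 0 := mul_nonpos_of_nonpos_of_nonneg h hpa.le
      linarith [heq ▸ this]
    have hgb : 0 < g b := hga.trans (hgmono a b hab)
    calc g a * p a < g b * p a := by
          exact mul_lt_mul_of_pos_right (hgmono a b hab) hpa
      _ < g b * p b := by
          exact mul_lt_mul_of_pos_left (hpmono a b ha hab) hgb
  -- existence via IVT
  set M : ℝ := max 1 ((T + L + 2 * β) / (L - 2 * β / (k:ℝ))) with hM
  have hM0 : (0:ℝ) ≤ M := le_trans zero_le_one (le_max_left _ _)
  have hgM : T ≤ g M := by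
    have h1 : (T + L + 2 * β) / (L - 2 * β / (k:ℝ)) ≤ M := le_max_right _ _
    have h2 : T + L + 2 * β ≤ (L - 2 * β / (k:ℝ)) * M := by
      rw [div_le_iff₀ hs] at h1
      linarith
    have h3 : g M = (L - 2 * β / (k:ℝ)) * M - (L + 2 * β * (1 - 1 / (k:ℝ))) := by
      simp only [hg]
      field_simp
      ring
    have h5 : 0 ≤ 1 / (k:ℝ) := by positivity
    have h4 : 2 * β * (1 - 1 / (k:ℝ)) ≤ 2 * β := by nlinarith
    rw [h3]
    linarith
  have hpM : 1 ≤ p M := by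
    simp only [hp]
    have h6 : 0 ≤ M / (k:ℝ) := div_nonneg hM0 hk0.le
    exact one_le_pow₀ (by linarith)
  have hfM : T ≤ g M * p M := by
    calc T = T * 1 := by ring
      _ ≤ g M * p M := mul_le_mul hgM hpM zero_le_one (le_trans hT.le hgM)
  have hf0 : g 0 * p 0 < 0 := by
    have hp0 : p 0 = 1 := by simp [hp]
    have hg0 : g 0 < 0 := by
      simp only [hg]
      have h5 : 1 / (k:ℝ) ≤ 1 := by
        rw [div_le_one hk0]; exact hk1
      have h6 : 2 * β * (1 / (k:ℝ)) ≤ 2 * β * 1 := by nlinarith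
      have h7 : (0:ℝ) / (k:ℝ) = 0 := zero_div _
      rw [h7]
      nlinarith
    rw [hp0]; linarith
  have hcont : ContinuousOn (fun ω => g ω * p ω) (Set.Icc 0 M) := by
    apply Continuous.continuousOn
    simp only [hg, hp]
    fun_prop
  have hIVT := intermediate_value_Icc hM0 hcont
  have hTmem : T ∈ Set.Icc ((fun ω => g ω * p ω) 0) ((fun ω => g ω * p ω) M) := by
    constructor
    · simpa using le_of_lt (lt_trans hf0 hT)
    · simpa using hfM
  obtain ⟨ω, hωmem, hωeq⟩ := hIVT hTmem
  have hωpos : 0 < ω := by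
    rcases lt_or_eq_of_le hωmem.1 with h | h
    · exact h
    · exfalso
      rw [← h] at hωeq
      simp only at hωeq
      linarith [hωeq ▸ hf0]
  refine ⟨ω, ⟨hωpos, ?_⟩, ?_⟩
  · exact hωeq.symm
  · rintro y ⟨hy0, hyeq⟩
    have hyeq' : g y * p y = T := hyeq.symm
    have hωeq' : g ω * p ω = T := hωeq
    rcases lt_trichotomy y ω with h | h | h
    · exfalso
      have := key y ω hy0.le h hyeq'
      rw [hyeq', hωeq'] at this
      exact lt_irrefl _ this
    · exact h
    · exfalso
      have := key ω y hωpos.le h hωeq'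
      rw [hyeq', hωeq'] at this
      exact lt_irrefl _ this
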